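/- Let Z be a chi-squared random variable with R degrees of freedom. Then for all u > 0, P(Z - R > 2√(Ru) + 2u) < e^{-u} and P(R - Z > 2√(Ru)) < e^{-u} imply that for every real t ≥ 2, E[|Z - R|^t] ≤ 2·(√2·t + √(2Rt))^t. -/

import Mathlib

open MeasureTheory Set
open scoped ENNReal Topology

section AuxiliaryLemmas


/-- Pointwise bound: `u^α e^{-u} ≤ e^{(α-β)log α + (β-α)} u^β e^{-(β/α)u}`. -/
lemma pw_rpow_exp {α β u : ℝ} (hβ : 0 < β) (hαβ : β ≤ α) (hu : 0 < u) :
    u ^ α * Real.exp (-u) ≤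
      Real.exp ((α - β) * Real.log α + (β - α)) * (u ^ β * Real.exp (-(β / α * u))) := by
  have hα : 0 < α := lt_of_lt_of_le hβ hαβ
  rw [Real.rpow_def_of_pos hu, Real.rpow_def_of_pos hu, ← Real.exp_add, ← Real.exp_add,
    ← Real.exp_add]
  apply Real.exp_le_exp.2
  have h := Real.log_le_sub_one_of_pos (show 0 < u / α by positivity)
  rw [Real.log_div hu.ne' hα.ne'] at h
  have key : (α - β) * (Real.log u - Real.log α) ≤ (α - β) * (u / α - 1) :=
    mul_le_mul_of_nonneg_left h (by linarith)
  have hfield : (α - β) * (u / α) + β / α * u = u := by field_simp; ring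
  nlinarith [key, hfield]

lemma integrableOn_rpow_mul_exp_neg_mul {a r : ℝ} (ha : 0 < a) (hr : 0 < r) :
    IntegrableOn (fun x : ℝ => x ^ (a - 1) * Real.exp (-(r * x))) (Ioi 0) := by
  have h0 : IntegrableOn (fun x : ℝ => Real.exp (-x) * x ^ (a - 1)) (Ioi 0) :=
    Real.GammaIntegral_convergent ha
  have h1 : IntegrableOn (fun x : ℝ => Real.exp (-(r * x)) * (r * x) ^ (a - 1)) (Ioi 0) := by
    have := (integrableOn_Ioi_comp_mul_left_iff
      (fun x : ℝ => Real.exp (-x) * x ^ (a - 1)) 0 hr).2 (by rwa [mul_zero])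
    exact this
  have h2 : IntegrableOn (fun x : ℝ => r ^ (a - 1) * (x ^ (a - 1) * Real.exp (-(r * x))))
      (Ioi 0) := by
    apply IntegrableOn.congr_fun h1 _ measurableSet_Ioi
    intro x hx
    have hx0 : (0:ℝ) < x := hx
    simp only
    rw [Real.mul_rpow hr.le hx0.le]
    ring
  have h3 : IntegrableOn (fun x : ℝ =>
      r ^ (1 - a) * (r ^ (a - 1) * (x ^ (a - 1) * Real.exp (-(r * x))))) (Ioi 0) :=
    h2.const_mul _
  apply IntegrableOn.congr_fun h3 _ measurableSet_Ioi
  intro x _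
  simp only
  rw [← mul_assoc, ← Real.rpow_add hr]
  simp

lemma lint_rpow_exp {a r : ℝ} (ha : 0 < a) (hr : 0 < r) :
    ∫⁻ u in Ioi (0 : ℝ), ENNReal.ofReal (u ^ (a - 1) * Real.exp (-(r * u))) =
      ENNReal.ofReal ((1 / r) ^ a * Real.Gamma a) := by
  rw [← Real.integral_rpow_mul_exp_neg_mul_Ioi ha hr]
  rw [← MeasureTheory.ofReal_integral_eq_lintegral_ofReal
    (integrableOn_rpow_mul_exp_neg_mul ha hr) ?_]
  rw [Filter.EventuallyLE, ae_restrict_iff' measurableSet_Ioi]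
  refine Filter.Eventually.of_forall fun x hx => ?_
  have hx0 : (0:ℝ) < x := hx
  simp only [Pi.zero_apply]
  positivity

lemma exp_mul_le {x y c : ℝ} (hc : 0 < c) (h : x + Real.log c ≤ y) :
    Real.exp x * c ≤ Real.exp y := by
  calc Real.exp x * c = Real.exp (x + Real.log c) := by rw [Real.exp_add, Real.exp_log hc]
    _ ≤ Real.exp y := Real.exp_le_exp.2 h

lemma J2 {s : ℝ} (hs : 1 ≤ s) :
    ∫⁻ u in Ioi (0 : ℝ), ENNReal.ofReal (u ^ s * Real.exp (-u)) ≤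
      ENNReal.ofReal (s ^ s) := by
  have hs0 : (0:ℝ) < s := lt_of_lt_of_le one_pos hs
  set C : ℝ := Real.exp ((s - 1) * Real.log s + (1 - s)) with hC
  have step1 : ∫⁻ u in Ioi (0 : ℝ), ENNReal.ofReal (u ^ s * Real.exp (-u)) ≤
      ∫⁻ u in Ioi (0 : ℝ), ENNReal.ofReal (C * (u ^ ((2:ℝ) - 1) * Real.exp (-(1/s * u)))) := by
    refine lintegral_mono_ae ((ae_restrict_iff' measurableSet_Ioi).2
      (Filter.Eventually.of_forall fun u hu => ?_))
    refine ENNReal.ofReal_le_ofReal ?_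
    have := pw_rpow_exp one_pos hs hu
    norm_num at this ⊢
    convert this using 3
  refine step1.trans ?_
  have hmeas : Measurable fun u : ℝ =>
      ENNReal.ofReal (u ^ ((2:ℝ) - 1) * Real.exp (-(1/s * u))) := by fun_prop
  calc ∫⁻ u in Ioi (0 : ℝ), ENNReal.ofReal (C * (u ^ ((2:ℝ) - 1) * Real.exp (-(1/s * u))))
      = ∫⁻ u in Ioi (0 : ℝ),
          ENNReal.ofReal C * ENNReal.ofReal (u ^ ((2:ℝ) - 1) * Real.exp (-(1/s * u))) := by
        simp_rw [ENNReal.ofReal_mul (show (0:ℝ) ≤ C from Real.exp_nonneg _)]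
    _ = ENNReal.ofReal C * ENNReal.ofReal ((1 / (1/s)) ^ (2:ℝ) * Real.Gamma 2) := by
        rw [lintegral_const_mul _ hmeas, lint_rpow_exp two_pos (by positivity)]
    _ ≤ ENNReal.ofReal (s ^ s) := by
        rw [← ENNReal.ofReal_mul (Real.exp_nonneg _)]
        refine ENNReal.ofReal_le_ofReal ?_
        rw [one_div_one_div, Real.Gamma_two, mul_one]
        have hlog := Real.log_le_sub_one_of_pos hs0
        rw [Real.rpow_def_of_pos hs0, Real.rpow_def_of_pos hs0, ← Real.exp_add]
        apply Real.exp_le_exp.2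
        nlinarith [hlog]

lemma J3 {t : ℝ} (ht : 2 ≤ t) :
    ∫⁻ u in Ioi (0 : ℝ), ENNReal.ofReal (u ^ t * Real.exp (-u)) ≤
      ENNReal.ofReal (t ^ t * (Real.sqrt 2 / 2) ^ t) := by
  have ht0 : (0:ℝ) < t := lt_of_lt_of_le two_pos ht
  set C : ℝ := Real.exp ((t - 2) * Real.log t + (2 - t)) with hC
  have step1 : ∫⁻ u in Ioi (0 : ℝ), ENNReal.ofReal (u ^ t * Real.exp (-u)) ≤
      ∫⁻ u in Ioi (0 : ℝ), ENNReal.ofReal (C * (u ^ ((3:ℝ) - 1) * Real.exp (-(2/t * u)))) := by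
    refine lintegral_mono_ae ((ae_restrict_iff' measurableSet_Ioi).2
      (Filter.Eventually.of_forall fun u hu => ?_))
    refine ENNReal.ofReal_le_ofReal ?_
    have := pw_rpow_exp two_pos ht hu
    norm_num at this ⊢
    convert this using 3
  refine step1.trans ?_
  have hmeas : Measurable fun u : ℝ =>
      ENNReal.ofReal (u ^ ((3:ℝ) - 1) * Real.exp (-(2/t * u))) := by fun_prop
  calc ∫⁻ u in Ioi (0 : ℝ), ENNReal.ofReal (C * (u ^ ((3:ℝ) - 1) * Real.exp (-(2/t * u))))
      = ∫⁻ u in Ioi (0 : ℝ),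
          ENNReal.ofReal C * ENNReal.ofReal (u ^ ((3:ℝ) - 1) * Real.exp (-(2/t * u))) := by
        simp_rw [ENNReal.ofReal_mul (show (0:ℝ) ≤ C from Real.exp_nonneg _)]
    _ = ENNReal.ofReal C * ENNReal.ofReal ((1 / (2/t)) ^ (3:ℝ) * Real.Gamma 3) := by
        rw [lintegral_const_mul _ hmeas, lint_rpow_exp three_pos (by positivity)]
    _ ≤ ENNReal.ofReal (t ^ t * (Real.sqrt 2 / 2) ^ t) := by
        rw [← ENNReal.ofReal_mul (Real.exp_nonneg _)]
        refine ENNReal.ofReal_le_ofReal ?_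
        have hG3 : Real.Gamma 3 = 2 := by
          have := Real.Gamma_nat_eq_factorial 2
          norm_num at this
          convert this using 2; norm_num
        rw [one_div_div, hG3]
        have htpos : (0:ℝ) < t/2 := by positivity
        have h1 : Real.log t - Real.log 2 ≤ t/2 - 1 := by
          have := Real.log_le_sub_one_of_pos htpos
          rwa [Real.log_div ht0.ne' two_ne_zero] at this
        have h2 : Real.log 2 ≤ 1 := by
          have := Real.log_le_sub_one_of_pos (two_pos (α := ℝ))
          linarith
        have hs2 : Real.log (Real.sqrt 2 / 2) = - (Real.log 2 / 2) := by
          rw [Real.log_div (by positivity) two_ne_zero, Real.log_sqrt (by norm_num)]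
          ring
        have e1 : (t/2) ^ (3:ℝ) = Real.exp (3 * Real.log (t/2)) := by
          rw [Real.rpow_def_of_pos htpos]; ring_nf
        have e2 : t ^ t = Real.exp (t * Real.log t) := by
          rw [Real.rpow_def_of_pos ht0]; ring_nf
        have e3 : (Real.sqrt 2 / 2) ^ t = Real.exp (t * (-(Real.log 2 / 2))) := by
          rw [Real.rpow_def_of_pos (show (0:ℝ) < Real.sqrt 2 / 2 by positivity), hs2]; ring_nf
        calc Real.exp ((t - 2) * Real.log t + (2 - t)) * ((t/2) ^ (3:ℝ) * 2)
            = Real.exp ((t - 2) * Real.log t + (2 - t) + 3 * Real.log (t/2)) * 2 := by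
              rw [e1, ← mul_assoc, ← Real.exp_add]
          _ ≤ Real.exp (t * Real.log t + t * (-(Real.log 2 / 2))) := by
              refine exp_mul_le two_pos ?_
              rw [Real.log_div ht0.ne' two_ne_zero]
              nlinarith [mul_nonneg (by linarith : (0:ℝ) ≤ 1 - Real.log 2)
                (by linarith : (0:ℝ) ≤ t/2 - 1)]
          _ = t ^ t * (Real.sqrt 2 / 2) ^ t := by rw [e2, e3, Real.exp_add]

lemma convex_split {a b w₁ w₂ p : ℝ} (ha : 0 ≤ a) (hb : 0 ≤ b) (hw₁ : 0 < w₁)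
    (hw₂ : 0 < w₂) (hw : w₁ + w₂ = 1) (hp : 1 ≤ p) :
    (a + b) ^ p ≤ w₁ ^ (1 - p) * a ^ p + w₂ ^ (1 - p) * b ^ p := by
  have h := (convexOn_rpow hp).2 (mem_Ici.2 (show (0:ℝ) ≤ a / w₁ by positivity))
    (mem_Ici.2 (show (0:ℝ) ≤ b / w₂ by positivity)) hw₁.le hw₂.le hw
  simp only [smul_eq_mul] at h
  rw [mul_div_cancel₀ _ hw₁.ne', mul_div_cancel₀ _ hw₂.ne'] at h
  refine h.trans (le_of_eq ?_)
  rw [Real.div_rpow ha hw₁.le, Real.div_rpow hb hw₂.le]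
  rw [Real.rpow_sub hw₁, Real.rpow_sub hw₂, Real.rpow_one]
  field_simp
  simp only [pow_one, Real.rpow_one]
  ring

lemma lemD (R : ℕ) {t : ℝ} (ht : 2 ≤ t) :
    ∫⁻ u in Ioi (0:ℝ), ENNReal.ofReal ((2 * Real.sqrt (↑R * u)) ^ t) *
        ENNReal.ofReal (Real.exp (-u)) ≤
      ENNReal.ofReal (Real.sqrt (2 * ↑R * t) ^ t) := by
  have ht0 : (0:ℝ) < t := by linarith
  have hs : (1:ℝ) ≤ t/2 := by linarith
  have key : ∀ u : ℝ, 0 < u →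
      (2 * Real.sqrt (↑R * u)) ^ t = (4*(R:ℝ)) ^ (t/2) * u ^ (t/2) := by
    intro u hu
    have h4 : (2 : ℝ) * Real.sqrt (↑R * u) = Real.sqrt ((4*(R:ℝ)) * u) := by
      rw [show (4*(R:ℝ))*u = 4*((R:ℝ)*u) by ring, Real.sqrt_mul (by norm_num : (0:ℝ) ≤ 4),
        show Real.sqrt 4 = 2 by
          rw [show (4:ℝ) = 2^2 by norm_num, Real.sqrt_sq (by norm_num : (0:ℝ) ≤ 2)]]
    rw [h4, Real.sqrt_eq_rpow, ← Real.rpow_mul (by positivity),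
      show (1/(2:ℝ)) * t = t/2 by ring, Real.mul_rpow (by positivity) hu.le]
  calc ∫⁻ u in Ioi (0:ℝ), ENNReal.ofReal ((2 * Real.sqrt (↑R * u)) ^ t) *
        ENNReal.ofReal (Real.exp (-u))
      = ∫⁻ u in Ioi (0:ℝ), ENNReal.ofReal ((4*(R:ℝ)) ^ (t/2)) *
          ENNReal.ofReal (u ^ (t/2) * Real.exp (-u)) := by
        refine setLIntegral_congr_fun measurableSet_Ioi (
          fun u hu => ?_)
        rw [key u hu,
          ENNReal.ofReal_mul (show (0:ℝ) ≤ (4*(R:ℝ)) ^ (t/2) by positivity), mul_assoc,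
          ← ENNReal.ofReal_mul (Real.rpow_nonneg (le_of_lt hu) _)]
    _ = ENNReal.ofReal ((4*(R:ℝ)) ^ (t/2)) *
          ∫⁻ u in Ioi (0:ℝ), ENNReal.ofReal (u ^ (t/2) * Real.exp (-u)) :=
        lintegral_const_mul _ (by fun_prop)
    _ ≤ ENNReal.ofReal ((4*(R:ℝ)) ^ (t/2)) * ENNReal.ofReal ((t/2) ^ (t/2)) :=
        mul_le_mul_right (J2 hs) _
    _ = ENNReal.ofReal (Real.sqrt (2 * ↑R * t) ^ t) := by
        rw [← ENNReal.ofReal_mul (by positivity),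
          ← Real.mul_rpow (by positivity) (by positivity)]
        congr 1
        rw [Real.sqrt_eq_rpow, ← Real.rpow_mul (by positivity),
          show (1/(2:ℝ)) * t = t/2 by ring,
          show (4*(R:ℝ)) * (t/2) = 2 * ↑R * t by ring]

lemma lemE {t : ℝ} (ht : 2 ≤ t) :
    ∫⁻ u in Ioi (0:ℝ), ENNReal.ofReal ((2 * u) ^ t) * ENNReal.ofReal (Real.exp (-u)) ≤
      ENNReal.ofReal ((Real.sqrt 2 * t) ^ t) := by
  have ht0 : (0:ℝ) < t := by linarith
  calc ∫⁻ u in Ioi (0:ℝ), ENNReal.ofReal ((2 * u) ^ t) * ENNReal.ofReal (Real.exp (-u))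
      = ∫⁻ u in Ioi (0:ℝ), ENNReal.ofReal ((2:ℝ) ^ t) *
          ENNReal.ofReal (u ^ t * Real.exp (-u)) := by
        refine setLIntegral_congr_fun measurableSet_Ioi (
          fun u hu => ?_)
        have hu0 : (0:ℝ) < u := hu
        rw [Real.mul_rpow (by norm_num) hu0.le,
          ENNReal.ofReal_mul (show (0:ℝ) ≤ (2:ℝ) ^ t by positivity), mul_assoc,
          ← ENNReal.ofReal_mul (Real.rpow_nonneg hu0.le _)]
    _ = ENNReal.ofReal ((2:ℝ) ^ t) *
          ∫⁻ u in Ioi (0:ℝ), ENNReal.ofReal (u ^ t * Real.exp (-u)) :=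
        lintegral_const_mul _ (by fun_prop)
    _ ≤ ENNReal.ofReal ((2:ℝ) ^ t) * ENNReal.ofReal (t ^ t * (Real.sqrt 2 / 2) ^ t) :=
        mul_le_mul_right (J3 ht) _
    _ = ENNReal.ofReal ((Real.sqrt 2 * t) ^ t) := by
        rw [← ENNReal.ofReal_mul (by positivity)]
        congr 1
        calc (2:ℝ)^t * (t^t * (Real.sqrt 2/2)^t) = ((2:ℝ)^t * (Real.sqrt 2/2)^t) * t^t := by
              ring
          _ = Real.sqrt 2 ^ t * t ^ t := by
              rw [← Real.mul_rpow (by norm_num) (by positivity),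
                show (2:ℝ) * (Real.sqrt 2/2) = Real.sqrt 2 by ring]
          _ = (Real.sqrt 2 * t) ^ t := (Real.mul_rpow (Real.sqrt_nonneg 2) ht0.le).symm

lemma lemF (R : ℕ) {t : ℝ} (ht : 2 ≤ t) :
    ∫⁻ u in Ioi (0:ℝ), ENNReal.ofReal ((2 * Real.sqrt (↑R * u) + 2 * u) ^ t) *
        ENNReal.ofReal (Real.exp (-u)) ≤
      ENNReal.ofReal ((Real.sqrt 2 * t + Real.sqrt (2 * ↑R * t)) ^ t) := by
  have ht0 : (0:ℝ) < t := by linarith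
  rcases Nat.eq_zero_or_pos R with hR | hR
  · subst hR
    simp only [Nat.cast_zero, zero_mul, Real.sqrt_zero, mul_zero, zero_add, add_zero]
    exact lemE ht
  · set Ab : ℝ := Real.sqrt (2 * ↑R * t) with hAb
    set Bb : ℝ := Real.sqrt 2 * t with hBb
    have hAb0 : 0 < Ab := Real.sqrt_pos.2 (by positivity)
    have hBb0 : 0 < Bb := by positivity
    set M : ℝ := Bb + Ab with hM
    have hM0 : 0 < M := by positivity
    have hw : Ab/M + Bb/M = 1 := by field_simp; ring
    have pointwise : ∀ u : ℝ, 0 < u →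
        ENNReal.ofReal ((2 * Real.sqrt (↑R * u) + 2 * u) ^ t) *
            ENNReal.ofReal (Real.exp (-u)) ≤
          ENNReal.ofReal ((Ab/M) ^ (1-t)) * (ENNReal.ofReal ((2 * Real.sqrt (↑R * u)) ^ t) *
            ENNReal.ofReal (Real.exp (-u))) +
          ENNReal.ofReal ((Bb/M) ^ (1-t)) * (ENNReal.ofReal ((2 * u) ^ t) *
            ENNReal.ofReal (Real.exp (-u))) := by
      intro u hu
      have hsplit := convex_split (show (0:ℝ) ≤ 2 * Real.sqrt (↑R * u) by positivity)
        (show (0:ℝ) ≤ 2 * u by positivity) (div_pos hAb0 hM0) (div_pos hBb0 hM0) hw (by linarith : (1:ℝ) ≤ t)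
      calc ENNReal.ofReal ((2 * Real.sqrt (↑R * u) + 2 * u) ^ t) *
            ENNReal.ofReal (Real.exp (-u))
          ≤ (ENNReal.ofReal ((Ab/M) ^ (1-t) * (2 * Real.sqrt (↑R * u)) ^ t) +
              ENNReal.ofReal ((Bb/M) ^ (1-t) * (2 * u) ^ t)) *
              ENNReal.ofReal (Real.exp (-u)) := by
            refine mul_le_mul_left ?_ _
            refine (ENNReal.ofReal_le_ofReal hsplit).trans ?_
            exact ENNReal.ofReal_add_le
        _ = ENNReal.ofReal ((Ab/M) ^ (1-t)) * (ENNReal.ofReal ((2 * Real.sqrt (↑R * u)) ^ t) *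
              ENNReal.ofReal (Real.exp (-u))) +
            ENNReal.ofReal ((Bb/M) ^ (1-t)) * (ENNReal.ofReal ((2 * u) ^ t) *
              ENNReal.ofReal (Real.exp (-u))) := by
            rw [ENNReal.ofReal_mul (show (0:ℝ) ≤ (Ab/M) ^ (1-t) by positivity),
              ENNReal.ofReal_mul (show (0:ℝ) ≤ (Bb/M) ^ (1-t) by positivity), add_mul,
              mul_assoc, mul_assoc]
    have halg : ∀ (X : ℝ), 0 < X → (X/M) ^ (1-t) * X ^ t = X * M ^ (t-1) := by
      intro X hX
      rw [Real.div_rpow hX.le hM0.le, div_mul_eq_mul_div, ← Real.rpow_add hX,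
        sub_add_cancel, Real.rpow_one, div_eq_mul_inv, ← Real.rpow_neg hM0.le, neg_sub]
    calc ∫⁻ u in Ioi (0:ℝ), ENNReal.ofReal ((2 * Real.sqrt (↑R * u) + 2 * u) ^ t) *
          ENNReal.ofReal (Real.exp (-u))
        ≤ ∫⁻ u in Ioi (0:ℝ),
            (ENNReal.ofReal ((Ab/M) ^ (1-t)) * (ENNReal.ofReal ((2 * Real.sqrt (↑R * u)) ^ t) *
              ENNReal.ofReal (Real.exp (-u))) +
            ENNReal.ofReal ((Bb/M) ^ (1-t)) * (ENNReal.ofReal ((2 * u) ^ t) *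
              ENNReal.ofReal (Real.exp (-u)))) := by
          refine lintegral_mono_ae ((ae_restrict_iff' measurableSet_Ioi).2
            (Filter.Eventually.of_forall fun u hu => pointwise u hu))
      _ = ENNReal.ofReal ((Ab/M) ^ (1-t)) * (∫⁻ u in Ioi (0:ℝ),
              ENNReal.ofReal ((2 * Real.sqrt (↑R * u)) ^ t) * ENNReal.ofReal (Real.exp (-u))) +
          ENNReal.ofReal ((Bb/M) ^ (1-t)) * (∫⁻ u in Ioi (0:ℝ),
              ENNReal.ofReal ((2 * u) ^ t) * ENNReal.ofReal (Real.exp (-u))) := by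
          rw [lintegral_add_left (by fun_prop), lintegral_const_mul _ (by fun_prop),
            lintegral_const_mul _ (by fun_prop)]
      _ ≤ ENNReal.ofReal ((Ab/M) ^ (1-t)) * ENNReal.ofReal (Ab ^ t) +
          ENNReal.ofReal ((Bb/M) ^ (1-t)) * ENNReal.ofReal (Bb ^ t) := by
          refine add_le_add (mul_le_mul_right (lemD R ht) _) (mul_le_mul_right (lemE ht) _)
      _ = ENNReal.ofReal (M ^ t) := by
          rw [← ENNReal.ofReal_mul (show (0:ℝ) ≤ (Ab/M) ^ (1-t) by positivity),
            ← ENNReal.ofReal_mul (show (0:ℝ) ≤ (Bb/M) ^ (1-t) by positivity),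
            ← ENNReal.ofReal_add (by positivity) (by positivity),
            halg Ab hAb0, halg Bb hBb0]
          congr 1
          calc Ab * M ^ (t-1) + Bb * M ^ (t-1) = (Bb + Ab) * M ^ (t-1) := by ring
            _ = M ^ (1:ℝ) * M ^ (t-1) := by rw [Real.rpow_one]
            _ = M ^ t := by rw [← Real.rpow_add hM0]; norm_num

lemma tailBound {Ω : Type*} [MeasurableSpace Ω] (μ : Measure Ω) [IsProbabilityMeasure μ]
    (x : Ω → ℝ) (φ : ℝ → ℝ) (hmono : Monotone φ) (hφ0 : φ 0 = 0)
    (harch : ∀ r : ℝ, ∃ u : ℝ, 0 ≤ u ∧ r ≤ φ u)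
    (htail : ∀ u : ℝ, 0 < u → μ {ω | φ u < x ω} ≤ ENNReal.ofReal (Real.exp (-u)))
    {t : ℝ} (ht : 0 < t) {ε : ℝ} (hε : 0 < ε) :
    ∃ G : Ω → ℝ≥0∞, Measurable G ∧ (∀ ω, ENNReal.ofReal (max (x ω) 0 ^ t) ≤ G ω) ∧
      ∫⁻ ω, G ω ∂μ ≤ ENNReal.ofReal (φ ε ^ t) + ENNReal.ofReal (Real.exp (2*ε)) *
        ∫⁻ u in Ioi (0:ℝ), ENNReal.ofReal (φ u ^ t) * ENNReal.ofReal (Real.exp (-u)) := by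
  classical
  set c : ℕ → ℝ := fun k => φ (ε * k) with hc
  have hc0 : c 0 = 0 := by simp [hc, hφ0]
  have hcmono : Monotone c := fun i j h =>
    hmono (mul_le_mul_of_nonneg_left (Nat.cast_le.2 h) hε.le)
  have hcnn : ∀ k, 0 ≤ c k := fun k => hc0 ▸ hcmono (Nat.zero_le k)
  have hck : ∀ r : ℝ, ∃ k : ℕ, r ≤ c k := by
    intro r
    obtain ⟨u, hu0, hu⟩ := harch r
    obtain ⟨k, hk⟩ := exists_nat_ge (u/ε)
    refine ⟨k, hu.trans (hmono ?_)⟩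
    rw [div_le_iff₀ hε] at hk
    linarith [hk]
  set Δ : ℕ → ℝ≥0∞ := fun k => ENNReal.ofReal (c (k+1) ^ t - c k ^ t) with hΔ
  set A : ℕ → Set Ω := fun k => {ω | c k < x ω} with hA
  refine ⟨fun ω => ∑' k, (toMeasurable μ (A k)).indicator (fun _ => Δ k) ω, ?_, ?_, ?_⟩
  · exact Measurable.ennreal_tsum fun k =>
      measurable_const.indicator (measurableSet_toMeasurable _ _)
  · intro ω
    rcases le_or_gt (x ω) 0 with hx | hx
    · rw [max_eq_right hx, Real.zero_rpow ht.ne']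
      simp
    · rw [max_eq_left hx.le]
      have hex : ∃ k, x ω ≤ c k := hck (x ω)
      set K := Nat.find hex with hK
      have hKspec : x ω ≤ c K := Nat.find_spec hex
      refine le_trans ?_ (ENNReal.sum_le_tsum (Finset.range K))
      have hind : ∀ k ∈ Finset.range K,
          (toMeasurable μ (A k)).indicator (fun _ => Δ k) ω = Δ k := by
        intro k hk
        have hklt : c k < x ω := lt_of_not_ge (Nat.find_min hex (Finset.mem_range.1 hk))
        exact Set.indicator_of_mem (subset_toMeasurable μ (A k) hklt) _
      rw [Finset.sum_congr rfl hind, hΔ]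
      rw [← ENNReal.ofReal_sum_of_nonneg (fun i _ => by
        have := Real.rpow_le_rpow (hcnn i) (hcmono (Nat.le_succ i)) ht.le
        linarith)]
      rw [Finset.sum_range_sub (fun k => c k ^ t), hc0, Real.zero_rpow ht.ne', sub_zero]
      exact ENNReal.ofReal_le_ofReal (Real.rpow_le_rpow hx.le hKspec ht.le)
  · rw [lintegral_tsum (fun k =>
      (measurable_const.indicator (measurableSet_toMeasurable _ _)).aemeasurable)]
    have hterm : ∀ k, ∫⁻ ω, (toMeasurable μ (A k)).indicator (fun _ => Δ k) ω ∂μ =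
        Δ k * μ (A k) := by
      intro k
      rw [lintegral_indicator (measurableSet_toMeasurable _ _), setLIntegral_const,
        measure_toMeasurable]
    simp_rw [hterm]
    rw [tsum_eq_zero_add' ENNReal.summable]
    have hfirst : Δ 0 * μ (A 0) ≤ ENNReal.ofReal (φ ε ^ t) := by
      calc Δ 0 * μ (A 0) ≤ Δ 0 * 1 := mul_le_mul_right prob_le_one _
        _ = Δ 0 := mul_one _
        _ ≤ ENNReal.ofReal (φ ε ^ t) := by
            rw [hΔ]
            simp only
            rw [hc0, Real.zero_rpow ht.ne', sub_zero]
            refine ENNReal.ofReal_le_ofReal (le_of_eq ?_)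
            norm_num [hc]
    refine add_le_add hfirst ?_
    -- tail sum
    have hAtail : ∀ k : ℕ, μ (A (k+1)) ≤ ENNReal.ofReal (Real.exp (-(ε * ((k:ℝ)+1)))) := by
      intro k
      have := htail (ε * ((k:ℝ)+1)) (by positivity)
      refine le_trans (le_of_eq ?_) this
      congr 1
      rw [hA, hc]
      norm_num
    have hdecomp : ∀ k : ℕ, ENNReal.ofReal (Real.exp (-(ε * ((k:ℝ)+1)))) =
        ENNReal.ofReal (Real.exp (2*ε)) * ENNReal.ofReal (Real.exp (-(ε * ((k:ℝ)+3)))) := by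
      intro k
      rw [← ENNReal.ofReal_mul (Real.exp_nonneg _), ← Real.exp_add]
      congr 2
      ring
    calc ∑' k, Δ (k+1) * μ (A (k+1))
        ≤ ∑' k, ENNReal.ofReal (Real.exp (2*ε)) *
            (Δ (k+1) * ENNReal.ofReal (Real.exp (-(ε * ((k:ℝ)+3))))) := by
          refine ENNReal.tsum_le_tsum fun k => ?_
          calc Δ (k+1) * μ (A (k+1))
              ≤ Δ (k+1) * ENNReal.ofReal (Real.exp (-(ε * ((k:ℝ)+1)))) :=
                mul_le_mul_right (hAtail k) _
            _ = ENNReal.ofReal (Real.exp (2*ε)) *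
                (Δ (k+1) * ENNReal.ofReal (Real.exp (-(ε * ((k:ℝ)+3))))) := by
                rw [hdecomp k, mul_left_comm]
      _ = ENNReal.ofReal (Real.exp (2*ε)) *
            ∑' k, Δ (k+1) * ENNReal.ofReal (Real.exp (-(ε * ((k:ℝ)+3)))) :=
          ENNReal.tsum_mul_left
      _ ≤ ENNReal.ofReal (Real.exp (2*ε)) *
            ∫⁻ u in Ioi (0:ℝ), ENNReal.ofReal (φ u ^ t) * ENNReal.ofReal (Real.exp (-u)) := by
          refine mul_le_mul_right ?_ _
          -- the key sum-to-integral bound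
          have hexpint : ∀ T : ℝ, ENNReal.ofReal (Real.exp (-T)) =
              ∫⁻ u in Ioi T, ENNReal.ofReal (Real.exp (-u)) := by
            intro T
            have hInt : IntegrableOn (fun u : ℝ => Real.exp (-u)) (Ioi T) := by
              simpa using exp_neg_integrableOn_Ioi T one_pos
            rw [← integral_exp_neg_Ioi T,
              MeasureTheory.ofReal_integral_eq_lintegral_ofReal hInt
                (Filter.Eventually.of_forall fun u => Real.exp_nonneg _)]
          have hsummand : ∀ k : ℕ, Δ (k+1) * ENNReal.ofReal (Real.exp (-(ε * ((k:ℝ)+3)))) =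
              ∫⁻ u in Ioi (0:ℝ), (Ioi (ε * ((k:ℝ)+3))).indicator
                (fun u => Δ (k+1) * ENNReal.ofReal (Real.exp (-u))) u := by
            intro k
            rw [lintegral_indicator measurableSet_Ioi, Measure.restrict_restrict measurableSet_Ioi,
              Ioi_inter_Ioi, sup_eq_left.2 (by positivity : (0:ℝ) ≤ ε * ((k:ℝ)+3)),
              lintegral_const_mul _ (by fun_prop), ← hexpint]
          simp_rw [hsummand]
          rw [← lintegral_tsum (fun k => ((Measurable.const_mul (by fun_prop) _).indicator
            measurableSet_Ioi).aemeasurable)]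
          refine lintegral_mono_ae ((ae_restrict_iff' measurableSet_Ioi).2
            (Filter.Eventually.of_forall fun u hu => ?_))
          have hu0 : (0:ℝ) < u := hu
          -- pointwise: tsum of indicators is at most ofReal (φ u ^ t) * ofReal (exp (-u))
          have hite : ∀ k : ℕ, (Ioi (ε * ((k:ℝ)+3))).indicator
              (fun u => Δ (k+1) * ENNReal.ofReal (Real.exp (-u))) u =
              (if ε * ((k:ℝ)+3) < u then Δ (k+1) else 0) * ENNReal.ofReal (Real.exp (-u)) := by
            intro k
            rw [Set.indicator_apply]
            split_ifs with h h2 h3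
            · rfl
            · exact absurd h h2
            · exact absurd h3 h
            · rw [zero_mul]
          simp_rw [hite]
          rw [ENNReal.tsum_mul_right]
          refine mul_le_mul_left ?_ _
          -- bound the tsum
          refine Summable.tsum_le_of_sum_le ENNReal.summable fun s => ?_
          obtain ⟨n, hn⟩ := s.exists_nat_subset_range
          refine le_trans (Finset.sum_le_sum_of_subset hn) ?_
          have hexm : ∃ k : ℕ, ¬ (ε * ((k:ℝ)+3) < u) := by
            obtain ⟨k, hk⟩ := exists_nat_ge (u/ε)
            refine ⟨k, not_lt.2 ?_⟩
            rw [div_le_iff₀ hε] at hk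
            nlinarith [hk, hε.le]
          set m := Nat.find hexm with hm
          have hfilter : (Finset.range n).filter (fun k : ℕ => ε * ((k:ℝ)+3) < u) =
              Finset.range (min n m) := by
            ext k
            simp only [Finset.mem_filter, Finset.mem_range, lt_min_iff]
            constructor
            · rintro ⟨h1, h2⟩
              refine ⟨h1, ?_⟩
              by_contra hcon
              push_neg at hcon
              refine Nat.find_spec hexm ?_
              refine lt_of_le_of_lt ?_ h2
              have : (m:ℝ) ≤ (k:ℝ) := Nat.cast_le.2 hcon
              nlinarith [hε.le]
            · rintro ⟨h1, h2⟩
              exact ⟨h1, not_not.1 (Nat.find_min hexm h2)⟩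
          rw [← Finset.sum_filter, hfilter]
          set j := min n m with hj
          have hsum : ∑ k ∈ Finset.range j, Δ (k+1) =
              ENNReal.ofReal (c (j+1) ^ t - c 1 ^ t) := by
            rw [hΔ]
            rw [← ENNReal.ofReal_sum_of_nonneg (fun i _ => by
              have := Real.rpow_le_rpow (hcnn (i+1)) (hcmono (Nat.le_succ (i+1))) ht.le
              linarith)]
            congr 1
            exact Finset.sum_range_sub (fun k => c (k+1) ^ t) j
          rw [hsum]
          rcases Nat.eq_zero_or_pos j with hj0 | hj0
          · rw [hj0]
            simp only [zero_add, sub_self, ENNReal.ofReal_zero]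
            exact zero_le
          · have hPj : ε * (((j-1:ℕ):ℝ)+3) < u := by
              have : j - 1 < m := lt_of_lt_of_le (Nat.pred_lt hj0.ne') (min_le_right n m)
              exact not_not.1 (Nat.find_min hexm this)
            have hcast : ((j-1:ℕ):ℝ) = (j:ℝ) - 1 := by
              rw [Nat.cast_sub hj0]
              norm_num
            have hεj : ε * ((j:ℝ)+1) ≤ u := by
              rw [hcast] at hPj
              nlinarith [hε.le]
            have hcj : c (j+1) ≤ φ u := by
              rw [hc]
              refine hmono ?_
              push_cast
              linarith
            refine ENNReal.ofReal_le_ofReal ?_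
            have h1 : (0:ℝ) ≤ c 1 ^ t := Real.rpow_nonneg (hcnn 1) t
            have h2 : c (j+1) ^ t ≤ φ u ^ t := Real.rpow_le_rpow (hcnn _) hcj ht.le
            linarith

end AuxiliaryLemmas

/-- Laurent–Massart chi-squared tail bounds imply the central
absolute moment bound `E[|Z - R|^t] ≤ 2 (√2 t + √(2 R t))^t` for all `t ≥ 2`. -/
theorem stmt0 {Ω : Type*} [MeasurableSpace Ω] (μ : Measure Ω) [IsProbabilityMeasure μ]
    (R : ℕ) (Z : Ω → ℝ)
    (hupper : ∀ u : ℝ, 0 < u →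
      μ {ω | Z ω - R > 2 * Real.sqrt (R * u) + 2 * u} < ENNReal.ofReal (Real.exp (-u)))
    (hlower : ∀ u : ℝ, 0 < u →
      μ {ω | (R : ℝ) - Z ω > 2 * Real.sqrt (R * u)} < ENNReal.ofReal (Real.exp (-u))) :
    ∀ t : ℝ, 2 ≤ t →
      ∫⁻ ω, ENNReal.ofReal (|Z ω - R| ^ t) ∂μ ≤
        ENNReal.ofReal (2 * (Real.sqrt 2 * t + Real.sqrt (2 * R * t)) ^ t) := by
  intro t ht
  have ht0 : (0:ℝ) < t := by linarith
  have hRnn : (0:ℝ) ≤ (R:ℝ) := Nat.cast_nonneg R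
  -- the two φ functions
  set φu : ℝ → ℝ := fun u => 2 * Real.sqrt (↑R * u) + 2 * u with hφu
  set φl : ℝ → ℝ := fun u => 2 * Real.sqrt (↑R * u) with hφl
  have hφlmono : Monotone φl := by
    intro a b hab
    exact mul_le_mul_of_nonneg_left
      (Real.sqrt_le_sqrt (mul_le_mul_of_nonneg_left hab hRnn)) (by norm_num)
  have hφumono : Monotone φu := by
    intro a b hab
    have := hφlmono hab
    simp only [hφl, hφu] at this ⊢
    linarith
  -- constants
  have hAbnn : (0:ℝ) ≤ Real.sqrt (2 * ↑R * t) := Real.sqrt_nonneg _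
  have hBb0 : (0:ℝ) < Real.sqrt 2 * t := by positivity
  set M : ℝ := Real.sqrt 2 * t + Real.sqrt (2 * ↑R * t) with hMdef
  have hM0 : (0:ℝ) < M := by positivity
  have hAltM : Real.sqrt (2 * ↑R * t) ^ t < M ^ t :=
    Real.rpow_lt_rpow hAbnn (by rw [hMdef]; linarith) ht0
  -- choose ε by continuity
  set F : ℝ → ℝ := fun ε => φu ε ^ t + φl ε ^ t +
    Real.exp (2*ε) * (M ^ t + Real.sqrt (2 * ↑R * t) ^ t) with hFdef
  have hcont : ContinuousAt F 0 := by
    have cφu : Continuous φu := by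
      rw [hφu]; fun_prop
    have cφl : Continuous φl := by
      rw [hφl]; fun_prop
    have hφu0 : φu 0 = 0 := by simp [hφu]
    have hφl0 : φl 0 = 0 := by simp [hφl]
    have c1 : ContinuousAt (fun ε : ℝ => φu ε ^ t) 0 := by
      have h := Real.continuousAt_rpow_const (φu 0) t (Or.inr ht0.le)
      exact h.comp cφu.continuousAt
    have c2 : ContinuousAt (fun ε : ℝ => φl ε ^ t) 0 := by
      have h := Real.continuousAt_rpow_const (φl 0) t (Or.inr ht0.le)
      exact h.comp cφl.continuousAt
    have c3 : ContinuousAt (fun ε : ℝ => Real.exp (2*ε) *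
        (M ^ t + Real.sqrt (2 * ↑R * t) ^ t)) 0 := by fun_prop
    exact (c1.add c2).add c3
  have hF0 : F 0 < 2 * M ^ t := by
    have : F 0 = M ^ t + Real.sqrt (2 * ↑R * t) ^ t := by
      simp [hFdef, hφu, hφl, Real.zero_rpow ht0.ne']
    rw [this]
    linarith
  have hev : ∀ᶠ ε in nhdsWithin (0:ℝ) (Ioi 0), F ε < 2 * M ^ t ∧ 0 < ε := by
    refine Filter.Eventually.and ?_ self_mem_nhdsWithin
    exact ((hcont.tendsto).eventually_lt_const hF0).filter_mono nhdsWithin_le_nhds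
  obtain ⟨ε, hFε, hε0⟩ := hev.exists
  -- upper part
  have harchu : ∀ r : ℝ, ∃ u : ℝ, 0 ≤ u ∧ r ≤ φu u := by
    intro r
    refine ⟨max (r/2) 0, le_max_right _ _, ?_⟩
    have h1 : r/2 ≤ max (r/2) 0 := le_max_left _ _
    have h2 : (0:ℝ) ≤ Real.sqrt (↑R * max (r/2) 0) := Real.sqrt_nonneg _
    simp only [hφu]
    linarith
  have htailu : ∀ u : ℝ, 0 < u →
      μ {ω | φu u < Z ω - ↑R} ≤ ENNReal.ofReal (Real.exp (-u)) := by
    intro u hu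
    have h := (hupper u hu).le
    simp only [gt_iff_lt] at h
    exact h
  obtain ⟨Gu, hGum, hGupt, hGuint⟩ := tailBound μ (fun ω => Z ω - ↑R) φu hφumono
    (by simp [hφu]) harchu htailu ht0 hε0
  -- lower part
  have hlow : ∃ Gl : Ω → ℝ≥0∞, Measurable Gl ∧
      (∀ ω, ENNReal.ofReal (max ((R:ℝ) - Z ω) 0 ^ t) ≤ Gl ω) ∧
      ∫⁻ ω, Gl ω ∂μ ≤ ENNReal.ofReal (φl ε ^ t) + ENNReal.ofReal (Real.exp (2*ε)) *
        ENNReal.ofReal (Real.sqrt (2 * ↑R * t) ^ t) := by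
    rcases Nat.eq_zero_or_pos R with hR0 | hRpos
    · -- R = 0 : the lower tail has measure zero
      have hS : μ {ω | 0 < (R:ℝ) - Z ω} = 0 := by
        have hb : ∀ u : ℝ, 0 < u →
            μ {ω | 0 < (R:ℝ) - Z ω} ≤ ENNReal.ofReal (Real.exp (-u)) := by
          intro u hu
          refine le_trans (le_of_eq ?_) (hlower u hu).le
          subst hR0
          simp [gt_iff_lt]
        have htend : Filter.Tendsto (fun n : ℕ => ENNReal.ofReal (Real.exp (-((n:ℝ)+1))))
            Filter.atTop (𝓝 0) := by
          rw [show (0:ℝ≥0∞) = ENNReal.ofReal 0 by simp]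
          refine ENNReal.tendsto_ofReal ?_
          refine Real.tendsto_exp_atBot.comp ?_
          refine Filter.tendsto_neg_atTop_atBot.comp ?_
          exact Filter.tendsto_atTop_add_const_right _ 1 tendsto_natCast_atTop_atTop
        exact le_antisymm (ge_of_tendsto' htend fun n => hb ((n:ℝ)+1) (by positivity))
          zero_le
      refine ⟨(toMeasurable μ {ω | 0 < (R:ℝ) - Z ω}).indicator (fun _ => ⊤),
        measurable_const.indicator (measurableSet_toMeasurable _ _), ?_, ?_⟩
      · intro ω
        by_cases hω : ω ∈ toMeasurable μ {ω | 0 < (R:ℝ) - Z ω}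
        · rw [Set.indicator_of_mem hω]; exact le_top
        · rw [Set.indicator_of_notMem hω]
          have hnot : ω ∉ {ω | 0 < (R:ℝ) - Z ω} := fun h => hω (subset_toMeasurable _ _ h)
          have hle : (R:ℝ) - Z ω ≤ 0 := not_lt.1 hnot
          rw [max_eq_right hle, Real.zero_rpow ht0.ne', ENNReal.ofReal_zero]
      · rw [lintegral_indicator (measurableSet_toMeasurable _ _), setLIntegral_const,
          measure_toMeasurable, hS, mul_zero]
        exact zero_le
    · -- R ≥ 1
      have harchl : ∀ r : ℝ, ∃ u : ℝ, 0 ≤ u ∧ r ≤ φl u := by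
        intro r
        refine ⟨(max r 0)^2, by positivity, ?_⟩
        have hb1 : Real.sqrt ((max r 0)^2) = max r 0 := Real.sqrt_sq (le_max_right _ _)
        have hb2 : Real.sqrt ((max r 0)^2) ≤ Real.sqrt (↑R * (max r 0)^2) := by
          refine Real.sqrt_le_sqrt ?_
          nlinarith [sq_nonneg (max r 0), (by exact_mod_cast hRpos : (1:ℝ) ≤ (R:ℝ))]
        have hb3 : r ≤ max r 0 := le_max_left _ _
        have hb4 : (0:ℝ) ≤ max r 0 := le_max_right _ _
        simp only [hφl]
        nlinarith [hb1, hb2]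
      have htaill : ∀ u : ℝ, 0 < u →
          μ {ω | φl u < (R:ℝ) - Z ω} ≤ ENNReal.ofReal (Real.exp (-u)) := by
        intro u hu
        have h := (hlower u hu).le
        simp only [gt_iff_lt] at h
        exact h
      obtain ⟨Gl, h1, h2, h3⟩ := tailBound μ (fun ω => (R:ℝ) - Z ω) φl hφlmono
        (by simp [hφl]) harchl htaill ht0 hε0
      refine ⟨Gl, h1, h2, h3.trans ?_⟩
      exact add_le_add_right (mul_le_mul_right (lemD R ht) _) _
  obtain ⟨Gl, hGlm, hGlpt, hGlint⟩ := hlow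
  have hGu2 : ∫⁻ ω, Gu ω ∂μ ≤ ENNReal.ofReal (φu ε ^ t) +
      ENNReal.ofReal (Real.exp (2*ε)) * ENNReal.ofReal (M ^ t) := by
    refine hGuint.trans (add_le_add_right (mul_le_mul_right ?_ _) _)
    exact lemF R ht
  calc ∫⁻ ω, ENNReal.ofReal (|Z ω - ↑R| ^ t) ∂μ
      ≤ ∫⁻ ω, (Gu ω + Gl ω) ∂μ := by
        refine lintegral_mono fun ω => ?_
        rcases le_total (Z ω - ↑R) 0 with h | h
        · have habs : |Z ω - ↑R| = max ((R:ℝ) - Z ω) 0 := by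
            rw [abs_of_nonpos h, max_eq_left (by linarith)]
            ring
          rw [habs]
          exact (hGlpt ω).trans le_add_self
        · have habs : |Z ω - ↑R| = max (Z ω - ↑R) 0 := by
            rw [abs_of_nonneg h, max_eq_left h]
          rw [habs]
          exact (hGupt ω).trans le_self_add
    _ = (∫⁻ ω, Gu ω ∂μ) + ∫⁻ ω, Gl ω ∂μ := lintegral_add_left hGum _
    _ ≤ (ENNReal.ofReal (φu ε ^ t) + ENNReal.ofReal (Real.exp (2*ε)) *
          ENNReal.ofReal (M ^ t)) + (ENNReal.ofReal (φl ε ^ t) +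
          ENNReal.ofReal (Real.exp (2*ε)) * ENNReal.ofReal (Real.sqrt (2 * ↑R * t) ^ t)) :=
        add_le_add hGu2 hGlint
    _ ≤ ENNReal.ofReal (2 * M ^ t) := by
        rw [← ENNReal.ofReal_mul (Real.exp_nonneg _), ← ENNReal.ofReal_mul (Real.exp_nonneg _),
          ← ENNReal.ofReal_add (Real.rpow_nonneg ?nn1 t) (by positivity),
          ← ENNReal.ofReal_add (Real.rpow_nonneg ?nn2 t) (by positivity),
          ← ENNReal.ofReal_add (by positivity) (by positivity)]
        case nn1 => simp only [hφu]; positivity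
        case nn2 => simp only [hφl]; positivity
        refine ENNReal.ofReal_le_ofReal ?_
        have : F ε < 2 * M ^ t := hFε
        simp only [hFdef] at this
        nlinarith [this, Real.exp_nonneg (2*ε)]
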